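/- Let σ₁, σ₂, σ₃ be nonzero real constants and σ = exp(2σ₁x₁ + 2σ₂x₂ + 2σ₃x₃). Then the function u(x₁,x₂) = (1/(4σ₁σ₂))(e^{−2σ₁x₁} + e^{−2σ₂x₂} − e^{−2σ₁x₁−2σ₂x₂}) satisfies div(σ grad u) = 0 on ℝ³, and −σ·grad u = ((1/σ₂)e^{σ₂x₂+2σ₃x₃} sinh(σ₂x₂), (1/σ₁)e^{σ₁x₁+2σ₃x₃} sinh(σ₁x₁), 0). -/

import Mathlib

noncomputable def pd1 (f : ℝ → ℝ → ℝ → ℝ) (x₁ x₂ x₃ : ℝ) : ℝ := deriv (fun t => f t x₂ x₃) x₁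
noncomputable def pd2 (f : ℝ → ℝ → ℝ → ℝ) (x₁ x₂ x₃ : ℝ) : ℝ := deriv (fun t => f x₁ t x₃) x₂
noncomputable def pd3 (f : ℝ → ℝ → ℝ → ℝ) (x₁ x₂ x₃ : ℝ) : ℝ := deriv (fun t => f x₁ x₂ t) x₃

lemma dexp (a b x : ℝ) : HasDerivAt (fun t : ℝ => Real.exp (a * t + b)) (a * Real.exp (a * x + b)) x := by
  simpa [mul_comm] using (((hasDerivAt_id x).const_mul a).add_const b).exp

/-- The potential `u⁽¹⁾(1,0)` solves `div(σ grad u) = 0` for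
`σ = e^{2σ₁x₁+2σ₂x₂+2σ₃x₃}`, and its current density `−σ grad u` is
`((1/σ₂)e^{σ₂x₂+2σ₃x₃} sinh(σ₂x₂), (1/σ₁)e^{σ₁x₁+2σ₃x₃} sinh(σ₁x₁), 0)`. -/
theorem potential_degree_one_coefficient_one
    (σ₁ σ₂ σ₃ : ℝ) (hσ₁ : σ₁ ≠ 0) (hσ₂ : σ₂ ≠ 0) (hσ₃ : σ₃ ≠ 0)
    (σ u : ℝ → ℝ → ℝ → ℝ)
    (hσ : σ = fun x₁ x₂ x₃ => Real.exp (2 * σ₁ * x₁ + 2 * σ₂ * x₂ + 2 * σ₃ * x₃))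
    (hu : u = fun x₁ x₂ _ => 1 / (4 * σ₁ * σ₂) *
      (Real.exp (-2 * σ₁ * x₁) + Real.exp (-2 * σ₂ * x₂)
        - Real.exp (-2 * σ₁ * x₁ - 2 * σ₂ * x₂))) :
    ∀ x₁ x₂ x₃,
      pd1 (fun a b c => σ a b c * pd1 u a b c) x₁ x₂ x₃
        + pd2 (fun a b c => σ a b c * pd2 u a b c) x₁ x₂ x₃
        + pd3 (fun a b c => σ a b c * pd3 u a b c) x₁ x₂ x₃ = 0 ∧
      -(σ x₁ x₂ x₃ * pd1 u x₁ x₂ x₃)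
        = 1 / σ₂ * Real.exp (σ₂ * x₂ + 2 * σ₃ * x₃) * Real.sinh (σ₂ * x₂) ∧
      -(σ x₁ x₂ x₃ * pd2 u x₁ x₂ x₃)
        = 1 / σ₁ * Real.exp (σ₁ * x₁ + 2 * σ₃ * x₃) * Real.sinh (σ₁ * x₁) ∧
      -(σ x₁ x₂ x₃ * pd3 u x₁ x₂ x₃) = 0 := by
    -- explicit partial derivatives of u
  have hu1 : ∀ a b c : ℝ, pd1 u a b c
      = 1 / (2 * σ₂) * (Real.exp (-2 * σ₁ * a - 2 * σ₂ * b) - Real.exp (-2 * σ₁ * a)) := by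
    intro a b c
    have h1 : HasDerivAt (fun t : ℝ => Real.exp (-2 * σ₁ * t)) (-2 * σ₁ * Real.exp (-2 * σ₁ * a)) a := by
      simpa using dexp (-2 * σ₁) 0 a
    have h2 : HasDerivAt (fun t : ℝ => Real.exp (-2 * σ₁ * t - 2 * σ₂ * b))
        (-2 * σ₁ * Real.exp (-2 * σ₁ * a - 2 * σ₂ * b)) a := by
      simpa [sub_eq_add_neg] using dexp (-2 * σ₁) (-(2 * σ₂ * b)) a
    have H := (((h1.add_const (Real.exp (-2 * σ₂ * b))).sub h2).const_mul (1 / (4 * σ₁ * σ₂)))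
    rw [hu]
    simp only [pd1]
    rw [(show HasDerivAt (fun t => 1 / (4 * σ₁ * σ₂) * (Real.exp (-2 * σ₁ * t) + Real.exp (-2 * σ₂ * b) - Real.exp (-2 * σ₁ * t - 2 * σ₂ * b))) _ a from H).deriv]
    field_simp
    ring
  have hu2 : ∀ a b c : ℝ, pd2 u a b c
      = 1 / (2 * σ₁) * (Real.exp (-2 * σ₁ * a - 2 * σ₂ * b) - Real.exp (-2 * σ₂ * b)) := by
    intro a b c
    have h1 : HasDerivAt (fun t : ℝ => Real.exp (-2 * σ₂ * t)) (-2 * σ₂ * Real.exp (-2 * σ₂ * b)) b := by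
      simpa using dexp (-2 * σ₂) 0 b
    have h2 : HasDerivAt (fun t : ℝ => Real.exp (-2 * σ₁ * a - 2 * σ₂ * t))
        (-2 * σ₂ * Real.exp (-2 * σ₁ * a - 2 * σ₂ * b)) b := by
      have := dexp (-2 * σ₂) (-2 * σ₁ * a) b
      have e : (fun t : ℝ => Real.exp (-2 * σ₂ * t + -2 * σ₁ * a)) = fun t : ℝ => Real.exp (-2 * σ₁ * a - 2 * σ₂ * t) := by
        funext t; congr 1; ring
      rw [e] at this
      convert this using 2
      · congr 1; ring
    have H := ((((hasDerivAt_const b (Real.exp (-2 * σ₁ * a))).add h1).sub h2).const_mul (1 / (4 * σ₁ * σ₂)))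
    rw [hu]
    simp only [pd2]
    rw [(show HasDerivAt (fun t => 1 / (4 * σ₁ * σ₂) * (Real.exp (-2 * σ₁ * a) + Real.exp (-2 * σ₂ * t) - Real.exp (-2 * σ₁ * a - 2 * σ₂ * t))) _ b from H).deriv]
    field_simp
    ring
  have hu3 : ∀ a b c : ℝ, pd3 u a b c = 0 := by
    intro a b c
    rw [hu]
    simp only [pd3]
    exact deriv_const _ _
  intro x₁ x₂ x₃
  refine ⟨?_, ?_, ?_, ?_⟩
  · have e1 : (fun (a b c : ℝ) => σ a b c * pd1 u a b c)
        = fun (_ b c : ℝ) => 1 / (2 * σ₂) * (Real.exp (2 * σ₃ * c) - Real.exp (2 * σ₂ * b + 2 * σ₃ * c)) := by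
      funext t x₂ x₃
      rw [hσ, hu1 t x₂ x₃]
      have A : Real.exp (2 * σ₁ * t + 2 * σ₂ * x₂ + 2 * σ₃ * x₃) * Real.exp (-2 * σ₁ * t - 2 * σ₂ * x₂)
          = Real.exp (2 * σ₃ * x₃) := by rw [← Real.exp_add]; congr 1; ring
      have B : Real.exp (2 * σ₁ * t + 2 * σ₂ * x₂ + 2 * σ₃ * x₃) * Real.exp (-2 * σ₁ * t)
          = Real.exp (2 * σ₂ * x₂ + 2 * σ₃ * x₃) := by rw [← Real.exp_add]; congr 1; ring
      linear_combination (1 / (2 * σ₂)) * A - (1 / (2 * σ₂)) * B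
    have e2 : (fun (a b c : ℝ) => σ a b c * pd2 u a b c)
        = fun (a _ c : ℝ) => 1 / (2 * σ₁) * (Real.exp (2 * σ₃ * c) - Real.exp (2 * σ₁ * a + 2 * σ₃ * c)) := by
      funext x₁ t x₃
      rw [hσ, hu2 x₁ t x₃]
      have A : Real.exp (2 * σ₁ * x₁ + 2 * σ₂ * t + 2 * σ₃ * x₃) * Real.exp (-2 * σ₁ * x₁ - 2 * σ₂ * t)
          = Real.exp (2 * σ₃ * x₃) := by rw [← Real.exp_add]; congr 1; ring
      have B : Real.exp (2 * σ₁ * x₁ + 2 * σ₂ * t + 2 * σ₃ * x₃) * Real.exp (-2 * σ₂ * t)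
          = Real.exp (2 * σ₁ * x₁ + 2 * σ₃ * x₃) := by rw [← Real.exp_add]; congr 1; ring
      linear_combination (1 / (2 * σ₁)) * A - (1 / (2 * σ₁)) * B
    have e3 : (fun (a b c : ℝ) => σ a b c * pd3 u a b c) = fun (_ _ _ : ℝ) => (0 : ℝ) := by
      funext a b c; rw [hu3]; ring
    rw [e1, e2, e3]
    simp only [pd1, pd2, pd3, deriv_const]
    ring
  · rw [hσ, hu1 x₁ x₂ x₃, Real.sinh_eq]
    have A : Real.exp (2 * σ₁ * x₁ + 2 * σ₂ * x₂ + 2 * σ₃ * x₃) * Real.exp (-2 * σ₁ * x₁ - 2 * σ₂ * x₂)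
        = Real.exp (2 * σ₃ * x₃) := by rw [← Real.exp_add]; congr 1; ring
    have B : Real.exp (2 * σ₁ * x₁ + 2 * σ₂ * x₂ + 2 * σ₃ * x₃) * Real.exp (-2 * σ₁ * x₁)
        = Real.exp (2 * σ₂ * x₂ + 2 * σ₃ * x₃) := by rw [← Real.exp_add]; congr 1; ring
    have C : Real.exp (σ₂ * x₂ + 2 * σ₃ * x₃) * Real.exp (σ₂ * x₂)
        = Real.exp (2 * σ₂ * x₂ + 2 * σ₃ * x₃) := by rw [← Real.exp_add]; congr 1; ring
    have D : Real.exp (σ₂ * x₂ + 2 * σ₃ * x₃) * Real.exp (-(σ₂ * x₂))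
        = Real.exp (2 * σ₃ * x₃) := by rw [← Real.exp_add]; congr 1; ring
    linear_combination (-(1 / (2 * σ₂))) * A + (1 / (2 * σ₂)) * B - (1 / (2 * σ₂)) * C + (1 / (2 * σ₂)) * D
  · rw [hσ, hu2 x₁ x₂ x₃, Real.sinh_eq]
    have A : Real.exp (2 * σ₁ * x₁ + 2 * σ₂ * x₂ + 2 * σ₃ * x₃) * Real.exp (-2 * σ₁ * x₁ - 2 * σ₂ * x₂)
        = Real.exp (2 * σ₃ * x₃) := by rw [← Real.exp_add]; congr 1; ring
    have B : Real.exp (2 * σ₁ * x₁ + 2 * σ₂ * x₂ + 2 * σ₃ * x₃) * Real.exp (-2 * σ₂ * x₂)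
        = Real.exp (2 * σ₁ * x₁ + 2 * σ₃ * x₃) := by rw [← Real.exp_add]; congr 1; ring
    have C : Real.exp (σ₁ * x₁ + 2 * σ₃ * x₃) * Real.exp (σ₁ * x₁)
        = Real.exp (2 * σ₁ * x₁ + 2 * σ₃ * x₃) := by rw [← Real.exp_add]; congr 1; ring
    have D : Real.exp (σ₁ * x₁ + 2 * σ₃ * x₃) * Real.exp (-(σ₁ * x₁))
        = Real.exp (2 * σ₃ * x₃) := by rw [← Real.exp_add]; congr 1; ring
    linear_combination (-(1 / (2 * σ₁))) * A + (1 / (2 * σ₁)) * B - (1 / (2 * σ₁)) * C + (1 / (2 * σ₁)) * D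
  · rw [hu3]; ring
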